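/- arXiv:math/0409137 — 2 statements merged into one kernel-verified Lean document; each statement's English description precedes it below -/
import Mathlib

section
/- Let V be a finite-dimensional real inner product space, D a self-adjoint invertible endomorphism, and J an orthogonal complex structure (J² = -id). Then D and JDJ commute if and only if there exists an orthonormal basis diagonalising D whose elements are mapped by J to multiples of basis elements (a unitary eigenbasis for D). -/
open Module Submodule

section Aux

variable {V : Type*} [NormedAddCommGroup V] [InnerProductSpace ℝ V] [FiniteDimensional ℝ V]

set_option maxHeartbeats 1000000 in
private lemma JDJ_aux
    (D J : V →ₗ[ℝ] V)
    (hsa : ∀ x y : V, (inner ℝ (D x) y : ℝ) = inner ℝ x (D y))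
    (hJorth : ∀ x y : V, (inner ℝ (J x) (J y) : ℝ) = inner ℝ x y)
    (hJ2 : J ∘ₗ J = -LinearMap.id)
    (hcomm : D ∘ₗ (J ∘ₗ D ∘ₗ J) = (J ∘ₗ D ∘ₗ J) ∘ₗ D) :
    ∀ n (U : Submodule ℝ V), (∀ v ∈ U, D v ∈ U) → (∀ v ∈ U, J v ∈ U) →
      Module.finrank ℝ U = n →
      ∃ v : Fin n → V, (∀ i, v i ∈ U) ∧ Orthonormal ℝ v ∧
        (∀ i, ∃ c : ℝ, D (v i) = c • v i) ∧
        (∀ i, ∃ j, ∃ μ : ℝ, J (v i) = μ • v j) := by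
  have hJJ : ∀ z : V, J (J z) = -z := fun z => by
    have := DFunLike.congr_fun hJ2 z
    simpa using this
  have hJadj : ∀ x y : V, (inner ℝ (J x) y : ℝ) = -inner ℝ x (J y) := by
    intro x y
    have h1 : (inner ℝ (J x) (J (J y)) : ℝ) = inner ℝ x (J y) := hJorth x (J y)
    rw [hJJ y, inner_neg_right] at h1
    linarith
  intro n
  induction n using Nat.strong_induction_on with
  | _ n IH =>
  intro U hDU hJU hrank
  rcases Nat.eq_zero_or_pos n with rfl | hpos
  · exact ⟨Fin.elim0, fun i => i.elim0, ⟨fun i => i.elim0, fun {i} => i.elim0⟩,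
      fun i => i.elim0, fun i => i.elim0⟩
  have hUnt : Nontrivial U := by
    rw [← Module.finrank_pos_iff (R := ℝ)]
    omega
  set A := J ∘ₗ D ∘ₗ J with hAdef
  have hAU : ∀ v ∈ U, A v ∈ U := fun v hv => hJU _ (hDU _ (hJU _ hv))
  have hAsym : ∀ x y : V, (inner ℝ (A x) y : ℝ) = inner ℝ x (A y) := by
    intro x y
    have h1 : (inner ℝ (J (D (J x))) y : ℝ) = -inner ℝ (D (J x)) (J y) := hJadj _ _
    have h2 : (inner ℝ (D (J x)) (J y) : ℝ) = inner ℝ (J x) (D (J y)) := hsa _ _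
    have h3 : (inner ℝ (J x) (D (J y)) : ℝ) = -inner ℝ x (J (D (J y))) := hJadj _ _
    show (inner ℝ (J (D (J x))) y : ℝ) = inner ℝ x (J (D (J y)))
    rw [h1, h2, h3, neg_neg]
  set D' := D.restrict hDU with hD'def
  set A' := A.restrict hAU with hA'def
  have hD'sym : D'.IsSymmetric := fun x y => hsa x y
  have hA'sym : A'.IsSymmetric := fun x y => hAsym x y
  have hcomm' : Commute D' A' := by
    apply LinearMap.ext
    intro z
    apply Subtype.ext
    show D (A (z : V)) = A (D (z : V))
    exact DFunLike.congr_fun hcomm (z : V)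
  have htop := LinearMap.IsSymmetric.iSup_iSup_eigenspace_inf_eigenspace_eq_top_of_commute
    hD'sym hA'sym hcomm'
  have hex : ∃ (lam mu : ℝ) (z : U), z ≠ 0 ∧ D' z = lam • z ∧ A' z = mu • z := by
    by_contra hno
    push_neg at hno
    have hbot : ∀ α γ : ℝ,
        (Module.End.eigenspace D' α ⊓ Module.End.eigenspace A' γ : Submodule ℝ U) = ⊥ := by
      intro α γ
      rw [eq_bot_iff]
      intro z hz
      obtain ⟨h1, h2⟩ := Submodule.mem_inf.mp hz
      rw [Module.End.mem_eigenspace_iff] at h1 h2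
      by_contra hzne
      exact hno α γ z (by simpa using hzne) h1 h2
    simp only [hbot, iSup_bot] at htop
    exact absurd htop bot_ne_top
  obtain ⟨lam, mu, z0, hz0ne, hz0D, hz0A⟩ := hex
  have hz0vne : (z0 : V) ≠ 0 := fun h => hz0ne (Subtype.ext h)
  set x : V := ‖(z0 : V)‖⁻¹ • (z0 : V) with hxdef
  have hxU : x ∈ U := U.smul_mem _ z0.2
  have hnx : ‖x‖ = 1 := by
    rw [hxdef, norm_smul, norm_inv, norm_norm, inv_mul_cancel₀ (norm_ne_zero_iff.2 hz0vne)]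
  have hz0Dv : D (z0 : V) = lam • (z0 : V) := congrArg Subtype.val hz0D
  have hz0Av : A (z0 : V) = mu • (z0 : V) := congrArg Subtype.val hz0A
  have hxD : D x = lam • x := by
    rw [hxdef, map_smul, hz0Dv, smul_comm]
  have hxA : A x = mu • x := by
    rw [hxdef, map_smul, hz0Av, smul_comm]
  set y : V := J x with hydef
  have hyU : y ∈ U := hJU _ hxU
  have hny : ‖y‖ = 1 := by
    have h : ‖y‖ ^ 2 = ‖x‖ ^ 2 := by
      rw [← real_inner_self_eq_norm_sq, ← real_inner_self_eq_norm_sq]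
      exact hJorth x x
    nlinarith [norm_nonneg y]
  have hyD : D y = (-mu) • y := by
    have h1 : J (A x) = mu • y := by rw [hxA, map_smul]
    have h2 : J (A x) = -(D y) := by
      show J (J (D (J x))) = -(D (J x))
      rw [hJJ]
    rw [h2] at h1
    rw [neg_smul, ← h1, neg_neg]
  have hyJ : J y = -x := hJJ x
  have hxyo : (inner ℝ x y : ℝ) = 0 := by
    have h := hJadj x x
    have h2 : (inner ℝ x y : ℝ) = inner ℝ y x := real_inner_comm _ _
    rw [hydef] at h2 ⊢
    linarith [h, h2]
  have hyxo : (inner ℝ y x : ℝ) = 0 := by rw [real_inner_comm]; exact hxyo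
  set f : Fin 2 → V := ![x, y] with hfdef
  have honf : Orthonormal ℝ f := by
    rw [orthonormal_iff_ite]
    intro i j
    fin_cases i <;> fin_cases j <;>
      simp [hfdef, real_inner_self_eq_norm_sq, hnx, hny, hxyo, hyxo]
  set W : Submodule ℝ V := Submodule.span ℝ (Set.range f) with hWdef
  have hxW : x ∈ W := Submodule.subset_span ⟨0, rfl⟩
  have hyW : y ∈ W := Submodule.subset_span ⟨1, rfl⟩
  have hWU : W ≤ U := by
    rw [hWdef, Submodule.span_le]
    rintro _ ⟨i, rfl⟩
    fin_cases i
    · exact hxU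
    · exact hyU
  have hWfin : Module.finrank ℝ W = 2 := by
    rw [hWdef, finrank_span_eq_card honf.linearIndependent]
    simp
  have hWoi : ∀ z : V, (inner ℝ x z : ℝ) = 0 → (inner ℝ y z : ℝ) = 0 → z ∈ Wᗮ := by
    intro z h1 h2
    rw [Submodule.mem_orthogonal]
    intro u hu
    induction hu using Submodule.span_induction with
    | mem u hu =>
      obtain ⟨i, rfl⟩ := hu
      fin_cases i
      · exact h1
      · exact h2
    | zero => simp
    | add a b _ _ ha hb => rw [inner_add_left, ha, hb, add_zero]
    | smul c a _ ha => rw [inner_smul_left, ha, mul_zero]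
  set U' : Submodule ℝ V := U ⊓ Wᗮ with hU'def
  have hU'x : ∀ v ∈ U', (inner ℝ x v : ℝ) = 0 := fun v hv => hv.2 x hxW
  have hU'y : ∀ v ∈ U', (inner ℝ y v : ℝ) = 0 := fun v hv => hv.2 y hyW
  have hU'D : ∀ v ∈ U', D v ∈ U' := by
    intro v hv
    refine ⟨hDU v hv.1, hWoi _ ?_ ?_⟩
    · rw [← hsa, hxD, inner_smul_left]
      simp [hU'x v hv]
    · rw [← hsa, hyD, inner_smul_left]
      simp [hU'y v hv]
  have hU'J : ∀ v ∈ U', J v ∈ U' := by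
    intro v hv
    refine ⟨hJU v hv.1, hWoi _ ?_ ?_⟩
    · have h1 : (inner ℝ (J v) x : ℝ) = -inner ℝ v (J x) := hJadj v x
      have e1 : (inner ℝ x (J v) : ℝ) = inner ℝ (J v) x := real_inner_comm _ _
      have e3 : (inner ℝ v (J x) : ℝ) = inner ℝ (J x) v := real_inner_comm _ _
      have e4 : (inner ℝ (J x) v : ℝ) = 0 := by rw [← hydef]; exact hU'y v hv
      linarith
    · have h1 : (inner ℝ (J x) (J v) : ℝ) = inner ℝ x v := hJorth x v
      have e4 : (inner ℝ y (J v) : ℝ) = inner ℝ (J x) (J v) := by rw [hydef]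
      rw [e4, h1]
      exact hU'x v hv
  have hdisj : W ⊓ U' = ⊥ := by
    have h : W ⊓ U' ≤ W ⊓ Wᗮ := inf_le_inf_left W inf_le_right
    rw [W.inf_orthogonal_eq_bot] at h
    exact le_bot_iff.mp h
  have hsup : W ⊔ U' = U := by
    apply le_antisymm
    · exact sup_le hWU inf_le_left
    · intro u hu
      have hmem : u ∈ W ⊔ Wᗮ := by
        rw [Submodule.sup_orthogonal_of_hasOrthogonalProjection]
        trivial
      obtain ⟨p, hp, q, hq, rfl⟩ := Submodule.mem_sup.mp hmem
      have hqU : q ∈ U := by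
        have := U.sub_mem hu (hWU hp)
        simpa using this
      exact Submodule.mem_sup.mpr ⟨p, hp, q, ⟨hqU, hq⟩, rfl⟩
  have hranksum := Submodule.finrank_sup_add_finrank_inf_eq W U'
  rw [hsup, hdisj, hWfin, hrank, finrank_bot] at hranksum
  have hrank' : Module.finrank ℝ U' = n - 2 := by omega
  obtain ⟨v', hv'U, hv'on, hv'D, hv'J⟩ := IH (n - 2) (by omega) U' hU'D hU'J hrank'
  have hn2 : n = (n - 2) + 1 + 1 := by omega
  set w : Fin ((n - 2) + 1 + 1) → V := Fin.cons x (Fin.cons y v') with hwdef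
  have hw0 : w 0 = x := rfl
  have hw1 : w (Fin.succ 0) = y := rfl
  have hws : ∀ k, w (Fin.succ (Fin.succ k)) = v' k := fun k => rfl
  have hxv' : ∀ k, (inner ℝ x (v' k) : ℝ) = 0 := fun k => hU'x _ (hv'U k)
  have hyv' : ∀ k, (inner ℝ y (v' k) : ℝ) = 0 := fun k => hU'y _ (hv'U k)
  have hv'x : ∀ k, (inner ℝ (v' k) x : ℝ) = 0 := fun k => by
    rw [real_inner_comm]; exact hxv' k
  have hv'y : ∀ k, (inner ℝ (v' k) y : ℝ) = 0 := fun k => by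
    rw [real_inner_comm]; exact hyv' k
  have hwmem : ∀ p, w p ∈ U := by
    intro p
    refine Fin.cases hxU (fun q => ?_) p
    refine Fin.cases hyU (fun r => ?_) q
    exact (hv'U r).1
  have hwD : ∀ p, ∃ c : ℝ, D (w p) = c • w p := by
    intro p
    refine Fin.cases ⟨lam, by rw [hw0, hxD]⟩ (fun q => ?_) p
    refine Fin.cases ⟨-mu, by rw [hw1, hyD]⟩ (fun r => ?_) q
    obtain ⟨c, hc⟩ := hv'D r
    exact ⟨c, by rw [hws, hc]⟩
  have hwJ : ∀ p, ∃ q, ∃ μ : ℝ, J (w p) = μ • w q := by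
    intro p
    refine Fin.cases ⟨Fin.succ 0, 1, by rw [hw0, hw1, ← hydef, one_smul]⟩ (fun q => ?_) p
    refine Fin.cases ⟨0, -1, by rw [hw1, hw0, hyJ, neg_one_smul]⟩ (fun r => ?_) q
    obtain ⟨j, μ, hμ⟩ := hv'J r
    exact ⟨Fin.succ (Fin.succ j), μ, by rw [hws, hws, hμ]⟩
  have hv'ite := orthonormal_iff_ite.mp hv'on
  have hwon : Orthonormal ℝ w := by
    rw [orthonormal_iff_ite]
    have hxx : (inner ℝ x x : ℝ) = 1 := by
      rw [real_inner_self_eq_norm_sq, hnx]; norm_num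
    have hyy : (inner ℝ y y : ℝ) = 1 := by
      rw [real_inner_self_eq_norm_sq, hny]; norm_num
    intro p q
    refine Fin.cases ?_ (fun p' => ?_) p
    · refine Fin.cases ?_ (fun q' => ?_) q
      · rw [hw0, if_pos rfl]; exact hxx
      · refine Fin.cases ?_ (fun r => ?_) q'
        · rw [hw0, hw1, if_neg (Fin.succ_ne_zero (0 : Fin ((n - 2) + 1))).symm]; exact hxyo
        · rw [hw0, hws, if_neg (Fin.succ_ne_zero (Fin.succ r)).symm]; exact hxv' r
    · refine Fin.cases ?_ (fun q' => ?_) q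
      · refine Fin.cases ?_ (fun r => ?_) p'
        · rw [hw1, hw0, if_neg (Fin.succ_ne_zero (0 : Fin ((n - 2) + 1)))]; exact hyxo
        · rw [hws, hw0, if_neg (Fin.succ_ne_zero (Fin.succ r))]; exact hv'x r
      · refine Fin.cases ?_ (fun p'' => ?_) p' <;> refine Fin.cases ?_ (fun q'' => ?_) q'
        · rw [hw1, if_pos rfl]; exact hyy
        · rw [hw1, hws, if_neg fun h => (Fin.succ_ne_zero q'') (Fin.succ_injective _ h).symm]
          exact hyv' q''
        · rw [hws, hw1, if_neg fun h => (Fin.succ_ne_zero p'') (Fin.succ_injective _ h)]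
          exact hv'y p''
        · rw [hws, hws]
          by_cases h : p'' = q''
          · subst h
            rw [if_pos rfl]
            simpa using hv'ite p'' p''
          · rw [if_neg fun hq => h (Fin.succ_injective _ (Fin.succ_injective _ hq))]
            simpa [h] using hv'ite p'' q''
  refine ⟨fun i => w (Fin.cast hn2 i), fun i => hwmem _, ?_, fun i => hwD _, ?_⟩
  · exact hwon.comp (Fin.cast hn2) (Fin.cast_injective hn2)
  · intro i
    obtain ⟨q, μ, hμ⟩ := hwJ (Fin.cast hn2 i)
    have hq : Fin.cast hn2 (Fin.cast hn2.symm q) = q := Fin.ext (by simp)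
    refine ⟨Fin.cast hn2.symm q, μ, ?_⟩
    show J (w (Fin.cast hn2 i)) = μ • w (Fin.cast hn2 (Fin.cast hn2.symm q))
    rw [hq]
    exact hμ

end Aux

/-- For `D` self-adjoint invertible and `J` an orthogonal complex structure,
`D` commutes with `JDJ` iff there is an orthonormal eigenbasis of `D` whose
elements are mapped by `J` to multiples of basis elements. -/
theorem commute_JDJ_iff_unitary_eigenbasis
    {V : Type*} [NormedAddCommGroup V] [InnerProductSpace ℝ V] [FiniteDimensional ℝ V]
    (D J : V →ₗ[ℝ] V)
    (hsa : ∀ x y : V, (inner ℝ (D x) y : ℝ) = inner ℝ x (D y))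
    (hDbij : Function.Bijective D)
    (hJorth : ∀ x y : V, (inner ℝ (J x) (J y) : ℝ) = inner ℝ x y)
    (hJ2 : J ∘ₗ J = -LinearMap.id) :
    D ∘ₗ (J ∘ₗ D ∘ₗ J) = (J ∘ₗ D ∘ₗ J) ∘ₗ D ↔
      ∃ b : Module.Basis (Fin (Module.finrank ℝ V)) ℝ V, Orthonormal ℝ b ∧
        (∀ i, ∃ c : ℝ, D (b i) = c • b i) ∧
        (∀ i, ∃ j, ∃ μ : ℝ, J (b i) = μ • b j) := by
  have hJJ : ∀ z : V, J (J z) = -z := fun z => by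
    have := DFunLike.congr_fun hJ2 z
    simpa using this
  constructor
  · intro hcomm
    obtain ⟨v, hvU, hon, hD, hJ⟩ := JDJ_aux D J hsa hJorth hJ2 hcomm
      (Module.finrank ℝ V) ⊤ (fun _ _ => trivial) (fun _ _ => trivial) (finrank_top ℝ V)
    rcases Nat.eq_zero_or_pos (Module.finrank ℝ V) with h0 | hpos
    · have : Subsingleton V := (Module.finrank_zero_iff (R := ℝ)).mp h0
      have : IsEmpty (Fin (Module.finrank ℝ V)) := by rw [h0]; infer_instance
      refine ⟨Basis.empty V, ?_, fun i => this.elim i, fun i => this.elim i⟩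
      constructor
      · exact fun i => this.elim i
      · exact fun {i} => this.elim i
    · have : Nonempty (Fin (Module.finrank ℝ V)) := ⟨⟨0, hpos⟩⟩
      have hcard : Fintype.card (Fin (Module.finrank ℝ V)) = Module.finrank ℝ V := by simp
      refine ⟨basisOfOrthonormalOfCardEqFinrank hon hcard, ?_, ?_, ?_⟩ <;>
        rw [coe_basisOfOrthonormalOfCardEqFinrank]
      exacts [hon, hD, hJ]
  · rintro ⟨b, hon, hD, hJ⟩
    apply b.ext
    intro i
    obtain ⟨c, hc⟩ := hD i
    obtain ⟨j, μ, hj⟩ := hJ i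
    obtain ⟨c', hc'⟩ := hD j
    have hμ : μ ≠ 0 := by
      rintro rfl
      have : J (b i) = 0 := by simpa using hj
      have h2 := hJJ (b i)
      rw [this, map_zero] at h2
      exact b.ne_zero i (by simpa using h2.symm)
    have hJbj : J (b j) = (-μ⁻¹) • b i := by
      have h2 := hJJ (b i)
      rw [hj, map_smul] at h2
      have h3 : J (b j) = μ⁻¹ • (μ • J (b j)) := by
        rw [smul_smul, inv_mul_cancel₀ hμ, one_smul]
      rw [h3, h2]
      simp
    simp only [LinearMap.comp_apply, hc, hj, map_smul, hc', hJbj, smul_smul]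
    congr 1
    ring
end

section
/- On ℝ^4 with coordinates (x_1,x_3,x_5,t), the metric ds² = e^{-(2/3)mt}(dx_1² + dx_5²) + (4/9)m² e^{(2/3)mt}(dx_3 + x_5 dx_1)² + e^{-2mt} dt² is Ricci-flat. -/
noncomputable section

/-- Partial derivative `∂_i f` of a function on `ℝ^4`. -/
def pd (f : (Fin 4 → ℝ) → ℝ) (i : Fin 4) (p : Fin 4 → ℝ) : ℝ :=
  fderiv ℝ f p (Pi.single i 1)

/-- The metric `e^{-(2/3)mt}(dx₁² + dx₅²) + (4/9)m² e^{(2/3)mt}(dx₃ + x₅ dx₁)² + e^{-2mt} dt²`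
on `ℝ^4` with coordinates `(x₁, x₃, x₅, t) = (p 0, p 1, p 2, p 3)`. -/
def gMetric (m : ℝ) (p : Fin 4 → ℝ) : Matrix (Fin 4) (Fin 4) ℝ :=
  !![Real.exp (-(2 / 3) * m * p 3) + (4 / 9) * m ^ 2 * Real.exp ((2 / 3) * m * p 3) * (p 2) ^ 2,
       (4 / 9) * m ^ 2 * Real.exp ((2 / 3) * m * p 3) * p 2, 0, 0;
     (4 / 9) * m ^ 2 * Real.exp ((2 / 3) * m * p 3) * p 2,
       (4 / 9) * m ^ 2 * Real.exp ((2 / 3) * m * p 3), 0, 0;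
     0, 0, Real.exp (-(2 / 3) * m * p 3), 0;
     0, 0, 0, Real.exp (-2 * m * p 3)]

/-- Christoffel symbols `Γ^k_{ij}` of the metric. -/
def christoffel (m : ℝ) (k i j : Fin 4) (p : Fin 4 → ℝ) : ℝ :=
  (1 / 2) * ∑ l, (gMetric m p)⁻¹ k l *
    (pd (fun q => gMetric m q l i) j p + pd (fun q => gMetric m q l j) i p
      - pd (fun q => gMetric m q i j) l p)

/-- Riemann curvature tensor `R^l_{kij}` of the metric. -/
def riemann (m : ℝ) (l k i j : Fin 4) (p : Fin 4 → ℝ) : ℝ :=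
  pd (christoffel m l j k) i p - pd (christoffel m l i k) j p
    + ∑ s, christoffel m l i s p * christoffel m s j k p
    - ∑ s, christoffel m l j s p * christoffel m s i k p

/-- Ricci tensor `Ric_{kj} = R^i_{kij}`. -/
def ricci (m : ℝ) (k j : Fin 4) (p : Fin 4 → ℝ) : ℝ :=
  ∑ i, riemann m i k i j p

lemma pd_eq_of {f : (Fin 4 → ℝ) → ℝ} {L : (Fin 4 → ℝ) →L[ℝ] ℝ} {p : Fin 4 → ℝ}
    (h : HasFDerivAt f L p) (i : Fin 4) : pd f i p = L (Pi.single i 1) := by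
  rw [pd, h.fderiv]

lemma pd_const (c : ℝ) (i : Fin 4) (p : Fin 4 → ℝ) : pd (fun _ => c) i p = 0 := by
  rw [pd, fderiv_fun_const]; simp

lemma pd_F0 (A c : ℝ) (i : Fin 4) (p : Fin 4 → ℝ) :
    pd (fun q => A * Real.exp (c * q 3)) i p =
      if i = 3 then A * c * Real.exp (c * p 3) else 0 := by
  have h3 := hasFDerivAt_apply (𝕜 := ℝ) (3 : Fin 4) p
  have h := ((h3.const_mul c).exp).const_mul A
  rw [pd_eq_of h i]
  simp only [ContinuousLinearMap.smul_apply, ContinuousLinearMap.proj_apply,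
    Pi.single_apply, smul_eq_mul]
  fin_cases i <;> simp <;> ring

lemma pd_Fa (A c : ℝ) (i : Fin 4) (p : Fin 4 → ℝ) :
    pd (fun q => A * Real.exp (c * q 3) * q 2) i p =
      (if i = 3 then A * c * Real.exp (c * p 3) * p 2 else 0) +
      (if i = 2 then A * Real.exp (c * p 3) else 0) := by
  have h2 := hasFDerivAt_apply (𝕜 := ℝ) (2 : Fin 4) p
  have h3 := hasFDerivAt_apply (𝕜 := ℝ) (3 : Fin 4) p
  have h := (((h3.const_mul c).exp).const_mul A).mul h2
  rw [pd_eq_of (f := fun q => A * Real.exp (c * q 3) * q 2) h i]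
  simp only [ContinuousLinearMap.add_apply, ContinuousLinearMap.smul_apply,
    ContinuousLinearMap.proj_apply, Pi.single_apply, smul_eq_mul]
  fin_cases i <;> simp <;> ring

lemma pd_Fb (A c : ℝ) (i : Fin 4) (p : Fin 4 → ℝ) :
    pd (fun q => A * Real.exp (c * q 3) * (q 2 * q 2)) i p =
      (if i = 3 then A * c * Real.exp (c * p 3) * (p 2 * p 2) else 0) +
      (if i = 2 then 2 * A * Real.exp (c * p 3) * p 2 else 0) := by
  have h2 := hasFDerivAt_apply (𝕜 := ℝ) (2 : Fin 4) p
  have h3 := hasFDerivAt_apply (𝕜 := ℝ) (3 : Fin 4) p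
  have h := (((h3.const_mul c).exp).const_mul A).mul (h2.mul h2)
  rw [pd_eq_of (f := fun q => A * Real.exp (c * q 3) * (q 2 * q 2)) h i]
  simp only [ContinuousLinearMap.add_apply, ContinuousLinearMap.smul_apply,
    ContinuousLinearMap.proj_apply, Pi.single_apply, smul_eq_mul]
  fin_cases i <;> simp <;> ring

lemma pd_F0b (A c A' c' : ℝ) (i : Fin 4) (p : Fin 4 → ℝ) :
    pd (fun q => A * Real.exp (c * q 3) + A' * Real.exp (c' * q 3) * (q 2 * q 2)) i p =
      (if i = 3 then A * c * Real.exp (c * p 3) + A' * c' * Real.exp (c' * p 3) * (p 2 * p 2) else 0) +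
      (if i = 2 then 2 * A' * Real.exp (c' * p 3) * p 2 else 0) := by
  have h2 := hasFDerivAt_apply (𝕜 := ℝ) (2 : Fin 4) p
  have h3 := hasFDerivAt_apply (𝕜 := ℝ) (3 : Fin 4) p
  have h := (((h3.const_mul c).exp).const_mul A).add
    ((((h3.const_mul c').exp).const_mul A').mul (h2.mul h2))
  rw [pd_eq_of (f := fun q => A * Real.exp (c * q 3) + A' * Real.exp (c' * q 3) * (q 2 * q 2)) h i]
  simp only [ContinuousLinearMap.add_apply, ContinuousLinearMap.smul_apply,
    ContinuousLinearMap.proj_apply, Pi.single_apply, smul_eq_mul]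
  fin_cases i <;> simp <;> ring


lemma expZ (m : ℝ) (p : Fin 4 → ℝ) : Real.exp (0 * m * p 3) = 1 := by
  norm_num

lemma expA (m : ℝ) (p : Fin 4 → ℝ) : Real.exp (-(2/3) * m * p 3) = (Real.exp (1/3 * m * p 3) ^ 2)⁻¹ := by
  rw [show (-(2/3) * m * p 3 : ℝ) = -((2:ℕ) * (1/3 * m * p 3)) by push_cast; ring,
    Real.exp_neg, Real.exp_nat_mul]

lemma expB (m : ℝ) (p : Fin 4 → ℝ) : Real.exp (2/3 * m * p 3) = Real.exp (1/3 * m * p 3) ^ 2 := by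
  rw [show (2/3 * m * p 3 : ℝ) = (2:ℕ) * (1/3 * m * p 3) by push_cast; ring,
    Real.exp_nat_mul]

lemma expC (m : ℝ) (p : Fin 4 → ℝ) : Real.exp (-2 * m * p 3) = (Real.exp (1/3 * m * p 3) ^ 6)⁻¹ := by
  rw [show (-2 * m * p 3 : ℝ) = -((6:ℕ) * (1/3 * m * p 3)) by push_cast; ring,
    Real.exp_neg, Real.exp_nat_mul]

lemma expD (m : ℝ) (p : Fin 4 → ℝ) : Real.exp (2 * m * p 3) = Real.exp (1/3 * m * p 3) ^ 6 := by
  rw [show (2 * m * p 3 : ℝ) = (6:ℕ) * (1/3 * m * p 3) by push_cast; ring,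
    Real.exp_nat_mul]

lemma expE (m : ℝ) (p : Fin 4 → ℝ) : Real.exp (4/3 * m * p 3) = Real.exp (1/3 * m * p 3) ^ 4 := by
  rw [show (4/3 * m * p 3 : ℝ) = (4:ℕ) * (1/3 * m * p 3) by push_cast; ring,
    Real.exp_nat_mul]

lemma expF (m : ℝ) (p : Fin 4 → ℝ) : Real.exp (8/3 * m * p 3) = Real.exp (1/3 * m * p 3) ^ 8 := by
  rw [show (8/3 * m * p 3 : ℝ) = (8:ℕ) * (1/3 * m * p 3) by push_cast; ring,
    Real.exp_nat_mul]

def GinvM (m : ℝ) (p : Fin 4 → ℝ) : Matrix (Fin 4) (Fin 4) ℝ :=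
  !![(1) * Real.exp (2/3 * m * p 3), (-1) * Real.exp (2/3 * m * p 3) * p 2, 0, 0;
     (-1) * Real.exp (2/3 * m * p 3) * p 2, (9 / (4 * m ^ 2)) * Real.exp (-(2/3) * m * p 3) + (1) * Real.exp (2/3 * m * p 3) * (p 2 * p 2), 0, 0;
     0, 0, (1) * Real.exp (2/3 * m * p 3), 0;
     0, 0, 0, (1) * Real.exp (2 * m * p 3)]

lemma gI (m : ℝ) (hm : m ≠ 0) (p : Fin 4 → ℝ) : (gMetric m p)⁻¹ = GinvM m p := by
  apply Matrix.inv_eq_right_inv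
  have hX : Real.exp (1/3 * m * p 3) ≠ 0 := Real.exp_ne_zero _
  ext i j
  have hi : i = 0 ∨ i = 1 ∨ i = 2 ∨ i = 3 := by omega
  have hj : j = 0 ∨ j = 1 ∨ j = 2 ∨ j = 3 := by omega
  rcases hi with rfl|rfl|rfl|rfl <;> rcases hj with rfl|rfl|rfl|rfl <;>
    (simp only [gMetric, GinvM, Matrix.mul_apply, Fin.sum_univ_four, Matrix.one_apply,
        Matrix.cons_val_zero, Matrix.cons_val_one, Matrix.head_cons, Matrix.cons_val_two,
        Matrix.cons_val_three, Matrix.tail_cons, Matrix.head_fin_const, Matrix.of_apply,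
        Matrix.cons_val', Matrix.empty_val', Matrix.cons_val_fin_one]
     try simp only [expZ, expA, expB, expC, expD, expE, expF]
     try simp [Matrix.vecHead, Matrix.vecTail]
     try norm_num [Fin.ext_iff]
     try field_simp
     try ring
     try norm_num [Fin.ext_iff])

def Gam (m : ℝ) (q : Fin 4 → ℝ) : Fin 4 → Fin 4 → Fin 4 → ℝ :=
  ![![![0, 0, (2/9 * m ^ 2) * Real.exp (4/3 * m * q 3) * q 2, (-1/3 * m) * Real.exp (0 * m * q 3)],
      ![0, 0, (2/9 * m ^ 2) * Real.exp (4/3 * m * q 3), 0],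
      ![(2/9 * m ^ 2) * Real.exp (4/3 * m * q 3) * q 2, (2/9 * m ^ 2) * Real.exp (4/3 * m * q 3), 0, 0],
      ![(-1/3 * m) * Real.exp (0 * m * q 3), 0, 0, 0]],
   ![![0, 0, (1/2) * Real.exp (0 * m * q 3) + (-2/9 * m ^ 2) * Real.exp (4/3 * m * q 3) * (q 2 * q 2), (2/3 * m) * Real.exp (0 * m * q 3) * q 2],
      ![0, 0, (-2/9 * m ^ 2) * Real.exp (4/3 * m * q 3) * q 2, (1/3 * m) * Real.exp (0 * m * q 3)],
      ![(1/2) * Real.exp (0 * m * q 3) + (-2/9 * m ^ 2) * Real.exp (4/3 * m * q 3) * (q 2 * q 2), (-2/9 * m ^ 2) * Real.exp (4/3 * m * q 3) * q 2, 0, 0],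
      ![(2/3 * m) * Real.exp (0 * m * q 3) * q 2, (1/3 * m) * Real.exp (0 * m * q 3), 0, 0]],
   ![![(-4/9 * m ^ 2) * Real.exp (4/3 * m * q 3) * q 2, (-2/9 * m ^ 2) * Real.exp (4/3 * m * q 3), 0, 0],
      ![(-2/9 * m ^ 2) * Real.exp (4/3 * m * q 3), 0, 0, 0],
      ![0, 0, 0, (-1/3 * m) * Real.exp (0 * m * q 3)],
      ![0, 0, (-1/3 * m) * Real.exp (0 * m * q 3), 0]],
   ![![(1/3 * m) * Real.exp (4/3 * m * q 3) + (-4/27 * m ^ 3) * Real.exp (8/3 * m * q 3) * (q 2 * q 2), (-4/27 * m ^ 3) * Real.exp (8/3 * m * q 3) * q 2, 0, 0],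
      ![(-4/27 * m ^ 3) * Real.exp (8/3 * m * q 3) * q 2, (-4/27 * m ^ 3) * Real.exp (8/3 * m * q 3), 0, 0],
      ![0, 0, (1/3 * m) * Real.exp (4/3 * m * q 3), 0],
      ![0, 0, 0, (-1 * m) * Real.exp (0 * m * q 3)]]]

set_option maxHeartbeats 0 in
lemma christoffel_eq (m : ℝ) (hm : m ≠ 0) (k i j : Fin 4) (p : Fin 4 → ℝ) :
    christoffel m k i j p = Gam m p k i j := by
  have hX : Real.exp (1/3 * m * p 3) ≠ 0 := Real.exp_ne_zero _
  have Hg00 : (fun q : Fin 4 → ℝ => Real.exp (-(2/3) * m * q 3)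
        + 4/9 * m ^ 2 * Real.exp (2/3 * m * q 3) * q 2 ^ 2)
      = (fun q => (1) * Real.exp (-(2/3) * m * q 3)
        + (4/9 * m ^ 2) * Real.exp (2/3 * m * q 3) * (q 2 * q 2)) :=
    funext fun q => by ring
  have Hg22 : (fun q : Fin 4 → ℝ => Real.exp (-(2/3) * m * q 3))
      = (fun q => (1) * Real.exp (-(2/3) * m * q 3)) := funext fun q => by ring
  have Hg33 : (fun q : Fin 4 → ℝ => Real.exp (-2 * m * q 3))
      = (fun q => (1) * Real.exp (-2 * m * q 3)) := funext fun q => by ring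
  rw [christoffel, gI m hm p]
  have hk : k = 0 ∨ k = 1 ∨ k = 2 ∨ k = 3 := by omega
  have hi : i = 0 ∨ i = 1 ∨ i = 2 ∨ i = 3 := by omega
  have hj : j = 0 ∨ j = 1 ∨ j = 2 ∨ j = 3 := by omega
  rcases hk with rfl|rfl|rfl|rfl <;> rcases hi with rfl|rfl|rfl|rfl <;> rcases hj with rfl|rfl|rfl|rfl <;>
    (simp only [Fin.sum_univ_four, GinvM, gMetric, Gam,
        Matrix.cons_val_zero, Matrix.cons_val_one, Matrix.head_cons, Matrix.cons_val_two,
        Matrix.cons_val_three, Matrix.tail_cons, Matrix.head_fin_const, Matrix.of_apply,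
        Matrix.cons_val', Matrix.empty_val', Matrix.cons_val_fin_one]
     try simp only [Hg00, Hg22, Hg33]
     try simp only [pd_F0, pd_Fa, pd_Fb, pd_F0b, pd_const]
     try simp only [expZ, expA, expB, expC, expD, expE, expF]
     try simp [Matrix.vecHead, Matrix.vecTail]
     try norm_num [Fin.ext_iff]
     try field_simp
     try ring
     try norm_num [Fin.ext_iff])

set_option maxHeartbeats 0 in
/-- The metric is Ricci-flat. -/
theorem metric_ricci_flat (m : ℝ) (hm : m ≠ 0) :
    ∀ (p : Fin 4 → ℝ) (k j : Fin 4), ricci m k j p = 0 := by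
  intro p k j
  have hX : Real.exp (1/3 * m * p 3) ≠ 0 := Real.exp_ne_zero _
  have hch : ∀ (l a b : Fin 4), christoffel m l a b = fun q => Gam m q l a b :=
    fun l a b => funext fun q => christoffel_eq m hm l a b q
  have hk : k = 0 ∨ k = 1 ∨ k = 2 ∨ k = 3 := by omega
  have hj : j = 0 ∨ j = 1 ∨ j = 2 ∨ j = 3 := by omega
  rcases hk with rfl|rfl|rfl|rfl <;> rcases hj with rfl|rfl|rfl|rfl <;>
    (simp only [ricci, riemann, Fin.sum_univ_four, hch]
     simp only [Gam, Matrix.cons_val_zero, Matrix.cons_val_one, Matrix.head_cons,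
        Matrix.cons_val_two, Matrix.cons_val_three, Matrix.tail_cons, Matrix.head_fin_const]
     try simp only [pd_F0, pd_Fa, pd_Fb, pd_F0b, pd_const]
     try simp only [expZ, expA, expB, expC, expD, expE, expF]
     try simp [Matrix.vecHead, Matrix.vecTail]
     try norm_num [Fin.ext_iff]
     try field_simp
     try ring
     try norm_num [Fin.ext_iff])

end
end
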